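/- arXiv:1303.1395 — 3 statements merged into one kernel-verified Lean document; each statement's English description precedes it below -/
import Mathlib

section
/- A permutation π can be sorted by the PQS machine (pop stack, then queue, then stack) if and only if dividers can be inserted into π to obtain a divided permutation avoiding the divided patterns 132, 2|13, 32|1, and 2|3|1. -/
/-- `u` and `v` have the same length and are order isomorphic (same relative order of entries). -/
def OrderIsoList (u v : List ℕ) : Prop :=
  u.length = v.length ∧ ∀ i j, i < u.length → j < u.length →
    (u.getD i 0 < u.getD j 0 ↔ v.getD i 0 < v.getD j 0)

/-- `p` contains the pattern `q`: some subsequence of `p` is order isomorphic to `q`. -/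
def ContainsPat (p q : List ℕ) : Prop := ∃ s : List ℕ, s.Sublist p ∧ OrderIsoList s q

def AvoidsPat (p q : List ℕ) : Prop := ¬ ContainsPat p q

/-- `p` is a permutation of the values `1, …, p.length`. -/
def IsPermList (p : List ℕ) : Prop := p.Perm (List.range' 1 p.length)

/-- One step of the PQS machine.  State: (input, pop stack, queue, stack, output);
the pop stack and stack have their top at the head, the queue has its front at the
head, output is appended at the end.  The pop stack can only be emptied wholesale
into the queue. -/
inductive PQSStep :
    (List ℕ × List ℕ × List ℕ × List ℕ × List ℕ) →
    (List ℕ × List ℕ × List ℕ × List ℕ × List ℕ) → Prop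
  | input (x : ℕ) (inp ps q st out : List ℕ) :
      PQSStep (x :: inp, ps, q, st, out) (inp, x :: ps, q, st, out)
  | pop (inp ps q st out : List ℕ) (h : ps ≠ []) :
      PQSStep (inp, ps, q, st, out) (inp, [], q ++ ps, st, out)
  | deq (inp ps : List ℕ) (x : ℕ) (q st out : List ℕ) :
      PQSStep (inp, ps, x :: q, st, out) (inp, ps, q, x :: st, out)
  | output (inp ps q : List ℕ) (x : ℕ) (st out : List ℕ) :
      PQSStep (inp, ps, q, x :: st, out) (inp, ps, q, st, out ++ [x])

/-- `p` can be sorted by a pop stack, followed by a queue, followed by a stack. -/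
def PQSSortable (p : List ℕ) : Prop :=
  Relation.ReflTransGen PQSStep (p, [], [], [], []) ([], [], [], [], List.range' 1 p.length)

/-- `bs` is a division of `p`: a partition of `p` into consecutive nonempty blocks. -/
def IsDivision (p : List ℕ) (bs : List (List ℕ)) : Prop :=
  bs.flatten = p ∧ ∀ b ∈ bs, b ≠ []

/-- The divided permutation `bs` contains the divided pattern `qs`: one can pick, for each
block of `qs`, a subsequence of a block of `bs` (distinct blocks of `qs` going to distinct
blocks of `bs`, in order) so that the concatenation of the picked subsequences is order
isomorphic to the concatenation of the blocks of `qs`. -/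
def DividedContains (bs qs : List (List ℕ)) : Prop :=
  ∃ g : Fin qs.length → Fin bs.length, StrictMono g ∧
    ∃ ch : Fin qs.length → List ℕ,
      (∀ i, (ch i).Sublist (bs.get (g i))) ∧
      (∀ i, (ch i).length = (qs.get i).length) ∧
      OrderIsoList (List.ofFn ch).flatten qs.flatten

open List


def Has231 (w : List ℕ) : Prop := ∃ a b c : ℕ, c < a ∧ a < b ∧ [a,b,c] <+ w

/-- possible queue-words producible from pop stack `ps` and remaining input `inp`. -/
inductive BW : List ℕ → List ℕ → List ℕ → Prop
  | nil : BW [] [] []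
  | push (x : ℕ) (ps inp w : List ℕ) : BW (x::ps) inp w → BW ps (x::inp) w
  | dump (ps inp w : List ℕ) (h : ps ≠ []) : BW [] inp w → BW ps inp (ps ++ w)

def Compat (q st : List ℕ) : Prop := ∀ s ∈ st, ¬∃ b a : ℕ, a < s ∧ s < b ∧ [b,a] <+ q

def GoodInv (n : ℕ) (q st out : List ℕ) : Prop :=
  ∃ t, t ≤ n ∧ out = List.range' 1 t ∧ (q ++ st).Perm (List.range' (t+1) (n-t)) ∧
    st.Pairwise (· < ·) ∧ Compat q st ∧ ¬ Has231 q

lemma bw_division {ps inp w : List ℕ} (h : BW ps inp w) :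
    ∃ c cs, inp = c ++ List.flatten cs ∧ (∀ b ∈ cs, b ≠ ([] : List ℕ)) ∧
      w = (c.reverse ++ ps) ++ (cs.map List.reverse).flatten := by
  induction h with
  | nil => exact ⟨[], [], by simp, by simp, by simp⟩
  | push x ps inp w h ih =>
      obtain ⟨c, cs, h1, h2, h3⟩ := ih
      exact ⟨x :: c, cs, by simp [h1], h2, by simp [h3]⟩
  | dump ps inp w hne h ih =>
      obtain ⟨c, cs, h1, h2, h3⟩ := ih
      rcases eq_or_ne c [] with rfl | hc
      · exact ⟨[], cs, by simpa using h1, h2, by simpa using h3⟩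
      · refine ⟨[], c :: cs, by simpa using h1, ?_, by simp [h3]⟩
        intro b hb
        rcases List.mem_cons.mp hb with rfl | hb
        · exact hc
        · exact h2 b hb

lemma extract (fin : List ℕ) :
    ∀ s : (List ℕ × List ℕ × List ℕ × List ℕ × List ℕ),
      Relation.ReflTransGen PQSStep s ([],[],[],[],fin) →
      ∃ w, BW s.2.1 s.1 w ∧
        Relation.ReflTransGen PQSStep ([],[], s.2.2.1 ++ w, s.2.2.2.1, s.2.2.2.2) ([],[],[],[],fin) := by
  intro s h
  induction h using Relation.ReflTransGen.head_induction_on with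
  | refl => exact ⟨[], BW.nil, by simpa using Relation.ReflTransGen.refl⟩
  | head hstep _ ih =>
      cases hstep with
      | input x inp ps q st out =>
          obtain ⟨w, hbw, hr⟩ := ih
          exact ⟨w, BW.push x ps inp w hbw, hr⟩
      | pop inp ps q st out hne =>
          obtain ⟨w, hbw, hr⟩ := ih
          exact ⟨ps ++ w, BW.dump ps inp w hne hbw, by simpa [List.append_assoc] using hr⟩
      | deq inp ps x q st out =>
          obtain ⟨w, hbw, hr⟩ := ih
          exact ⟨w, hbw, Relation.ReflTransGen.head (PQSStep.deq [] [] x (q ++ w) st out) hr⟩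
      | output inp ps q x st out =>
          obtain ⟨w, hbw, hr⟩ := ih
          exact ⟨w, hbw, Relation.ReflTransGen.head (PQSStep.output [] [] (q ++ w) x st out) hr⟩

lemma good (n : ℕ) :
    ∀ s : (List ℕ × List ℕ × List ℕ × List ℕ × List ℕ),
      Relation.ReflTransGen PQSStep s ([],[],[],[],List.range' 1 n) →
      s.1 = [] → s.2.1 = [] → GoodInv n s.2.2.1 s.2.2.2.1 s.2.2.2.2 := by
  intro s h
  induction h using Relation.ReflTransGen.head_induction_on with
  | refl =>
      intro _ _
      refine ⟨n, le_rfl, rfl, by simp, by simp, by simp [Compat], ?_⟩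
      rintro ⟨a, b, c, _, _, hs⟩
      simpa using hs.length_le
  | head hstep _ ih =>
      cases hstep with
      | input x inp ps q st out => intro h1 _; exact absurd h1 (by simp)
      | pop inp ps q st out hne => intro _ h2; exact absurd h2 hne
      | deq inp ps x q st out =>
          intro h1 h2
          obtain ⟨t, ht, hout, hperm, hsort, hcompat, h231⟩ := ih h1 h2
          refine ⟨t, ht, hout, ?_, hsort.of_cons, ?_, ?_⟩
          · calc (x :: q) ++ st = x :: (q ++ st) := by simp
              _ ~ q ++ x :: st := List.perm_middle.symm
              _ ~ _ := hperm
          · intro s hs ⟨b, a, ha, hb, hsub⟩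
            cases hsub with
            | cons _ hsub' => exact hcompat s (List.mem_cons_of_mem x hs) ⟨b, a, ha, hb, hsub'⟩
            | cons_cons _ hsub' =>
                exact absurd (List.rel_of_pairwise_cons hsort hs) (by omega)
          · rintro ⟨a, b, c, hca, hab, hsub⟩
            cases hsub with
            | cons _ hsub' => exact h231 ⟨a, b, c, hca, hab, hsub'⟩
            | cons_cons _ hsub' =>
                exact hcompat x List.mem_cons_self ⟨b, c, hca, hab, hsub'⟩
      | output inp ps q x st out =>
          intro h1 h2
          obtain ⟨t', ht', hout, hperm, hsort, hcompat, h231⟩ := ih h1 h2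
          match t', hout with
          | 0, hout => exact absurd hout (by simp)
          | t+1, hout =>
          rw [List.range'_concat] at hout
          have hout' : out = List.range' 1 t := by
            have := congrArg List.dropLast hout
            simpa using this
          have hx : x = t + 1 := by
            have := congrArg List.getLast? hout
            simp [List.getLast?_concat] at this
            omega
          subst hx hout'
          have hmem : ∀ y ∈ q ++ st, t + 2 ≤ y := by
            intro y hy
            have h' := (hperm.mem_iff).mp hy
            obtain ⟨i, hi, hy'⟩ := List.mem_range'.mp h'
            omega
          refine ⟨t, by omega, rfl, ?_, ?_, ?_, h231⟩
          · calc q ++ (t+1) :: st ~ (t+1) :: (q ++ st) := List.perm_middle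
              _ ~ (t+1) :: List.range' (t+2) (n-(t+1)) := hperm.cons _
              _ = List.range' (t+1) (n-t) := by
                  rw [show n - t = (n - (t+1)) + 1 by omega, List.range'_succ]
          · refine List.Pairwise.cons ?_ hsort
            intro y hy
            have := hmem y (List.mem_append_right q hy)
            omega
          · intro s hs ⟨b, a, ha, hb, hsub⟩
            rcases List.mem_cons.mp hs with rfl | hs'
            · have : a ∈ q := hsub.subset (by simp)
              have := hmem a (List.mem_append_left st this)
              omega
            · exact hcompat s hs' ⟨b, a, ha, hb, hsub⟩

lemma greedy (n : ℕ) : ∀ m q st out, 2 * q.length + st.length ≤ m →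
    GoodInv n q st out →
    Relation.ReflTransGen PQSStep ([],[],q,st,out) ([],[],[],[],List.range' 1 n) := by
  intro m
  induction m with
  | zero =>
      rintro q st out hlen ⟨t, ht, rfl, hperm, -, -, -⟩
      have hq : q = [] := by cases q <;> simp_all
      have hst : st = [] := by cases st <;> simp_all
      subst hq hst
      have h0 : n - t = 0 := by simpa using hperm.length_eq.symm
      have : t = n := by omega
      subst this
      exact Relation.ReflTransGen.refl
  | succ m ih =>
      rintro q st out hlen ⟨t, ht, rfl, hperm, hsort, hcompat, h231⟩
      by_cases hdone : q = [] ∧ st = []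
      · obtain ⟨rfl, rfl⟩ := hdone
        have h0 : n - t = 0 := by simpa using hperm.length_eq.symm
        have : t = n := by omega
        subst this
        exact Relation.ReflTransGen.refl
      · have hlt : t < n := by
          by_contra hc
          have : n - t = 0 := by omega
          rw [this] at hperm
          have := hperm.length_eq
          simp at this
          rcases q with _ | _ <;> rcases st with _ | _ <;> simp_all
        have hmem : t + 1 ∈ q ++ st := by
          refine hperm.mem_iff.mpr ?_
          exact List.mem_range'.mpr ⟨0, by omega, by omega⟩
        have hnd : (q ++ st).Nodup := hperm.nodup_iff.mpr List.nodup_range'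
        have hrange : ∀ y ∈ q ++ st, t + 1 ≤ y := by
          intro y hy
          obtain ⟨i, hi, hy'⟩ := List.mem_range'.mp (hperm.mem_iff.mp hy)
          omega
        -- case split on whether the stack head is t+1
        by_cases hcase : ∃ st', st = (t+1) :: st'
        · obtain ⟨st', rfl⟩ := hcase
          have hperm' : (q ++ st').Perm (List.range' (t+2) (n-(t+1))) := by
            have h1 : List.range' (t+1) (n-t) = (t+1) :: List.range' (t+2) (n-(t+1)) := by
              rw [show n - t = (n - (t+1)) + 1 by omega, List.range'_succ]
            have h2 : ((t+1) :: (q ++ st')).Perm ((t+1) :: List.range' (t+2) (n-(t+1))) :=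
              (List.perm_middle.symm.trans (h1 ▸ hperm))
            exact h2.cons_inv
          have hstep : PQSStep ([],[],q,(t+1)::st', List.range' 1 t)
              ([],[],q,st', List.range' 1 t ++ [t+1]) := PQSStep.output [] [] q (t+1) st' _
          refine Relation.ReflTransGen.head hstep ?_
          have hout : List.range' 1 t ++ [t+1] = List.range' 1 (t+1) := by
            rw [List.range'_concat]
            simp [Nat.add_comm]
          rw [hout]
          refine ih q st' _ (by simp at hlen ⊢; omega)
            ⟨t+1, by omega, rfl, hperm', hsort.of_cons, ?_, h231⟩
          intro s hs
          exact hcompat s (List.mem_cons_of_mem _ hs)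
        · -- stack head is not t+1, so t+1 is in the queue; dequeue
          have hstlb : ∀ y ∈ st, t + 1 < y := by
            rcases st with _ | ⟨s1, st''⟩
            · simp
            · have hs1 : t + 1 < s1 := by
                have h1 : t + 1 ≤ s1 := hrange s1 (List.mem_append_right q (by simp))
                rcases eq_or_lt_of_le h1 with h | h
                · exact absurd ⟨st'', by rw [← h]⟩ hcase
                · exact h
              intro y hy
              rcases List.mem_cons.mp hy with rfl | hy'
              · exact hs1
              · exact lt_trans hs1 (List.rel_of_pairwise_cons hsort hy')
          have hqmem : t + 1 ∈ q := by
            rcases List.mem_append.mp hmem with h | h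
            · exact h
            · exact absurd (hstlb _ h) (by omega)
          rcases hq : q with _ | ⟨x, q'⟩
          · rw [hq] at hqmem; simp at hqmem
          subst hq
          have hxlt : ∀ y ∈ st, x < y := by
            intro y hy
            by_contra hc
            push_neg at hc
            have hxy : y ≠ x := by
              intro hyx
              exact (List.disjoint_of_nodup_append hnd) (by simp) (hyx ▸ hy)
            have hylt : y < x := lt_of_le_of_ne hc (Ne.symm ?_)
            swap
            · exact fun h => hxy h.symm
            have hty : t + 1 < y := hstlb y hy
            have htx : t + 1 ≠ x := by omega
            have ht1q' : t + 1 ∈ q' := by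
              rcases List.mem_cons.mp hqmem with h | h
              · exact absurd h htx
              · exact h
            exact hcompat y hy ⟨x, t+1, by omega, hylt, by
              exact (List.cons_sublist_cons).mpr (List.singleton_sublist.mpr ht1q')⟩
          have hsort' : (x :: st).Pairwise (· < ·) := List.Pairwise.cons hxlt hsort
          have hperm'' : (q' ++ x :: st).Perm (List.range' (t+1) (n-t)) := by
            calc q' ++ x :: st ~ x :: (q' ++ st) := List.perm_middle
              _ = (x :: q') ++ st := by simp
              _ ~ _ := hperm
          have hcompat' : Compat q' (x :: st) := by
            intro s hs
            rcases List.mem_cons.mp hs with rfl | hs'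
            · rintro ⟨b, a, ha, hb, hsub⟩
              exact h231 ⟨s, b, a, ha, hb, (List.cons_sublist_cons).mpr hsub⟩
            · rintro ⟨b, a, ha, hb, hsub⟩
              exact hcompat s hs' ⟨b, a, ha, hb, hsub.cons x⟩
          have h231' : ¬ Has231 q' := by
            rintro ⟨a, b, c, hca, hab, hsub⟩
            exact h231 ⟨a, b, c, hca, hab, hsub.cons x⟩
          have hstep : PQSStep ([],[], x :: q', st, List.range' 1 t)
              ([],[], q', x :: st, List.range' 1 t) := PQSStep.deq [] [] x q' st _
          refine Relation.ReflTransGen.head hstep ?_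
          exact ih q' (x :: st) _ (by simp at hlen ⊢; omega)
            ⟨t, ht, rfl, hperm'', hsort', hcompat', h231'⟩

lemma pushAll (b : List ℕ) : ∀ inp ps q st out,
    Relation.ReflTransGen PQSStep (b ++ inp, ps, q, st, out) (inp, b.reverse ++ ps, q, st, out) := by
  induction b with
  | nil => intro inp ps q st out; simp; rfl
  | cons x b ih =>
      intro inp ps q st out
      refine Relation.ReflTransGen.head (PQSStep.input x (b ++ inp) ps q st out) ?_
      simpa [List.append_assoc] using ih inp (x :: ps) q st out

lemma load (bs : List (List ℕ)) (hne : ∀ b ∈ bs, b ≠ ([] : List ℕ)) : ∀ q st out,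
    Relation.ReflTransGen PQSStep (bs.flatten, [], q, st, out)
      ([], [], q ++ (bs.map List.reverse).flatten, st, out) := by
  induction bs with
  | nil => intro q st out; simp; rfl
  | cons b bs ih =>
      intro q st out
      have h2 : PQSStep (bs.flatten, b.reverse ++ [], q, st, out)
          (bs.flatten, [], q ++ (b.reverse ++ []), st, out) :=
        PQSStep.pop _ _ _ _ _ (by simpa using fun h => hne b (by simp) (List.reverse_eq_nil_iff.mp h))
      have h3 := ih (fun c hc => hne c (List.mem_cons_of_mem b hc)) (q ++ b.reverse) st out
      have h1 : Relation.ReflTransGen PQSStep ((b :: bs).flatten, [], q, st, out)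
          (bs.flatten, [], q ++ b.reverse, st, out) := by
        simpa using (pushAll b bs.flatten [] q st out).trans (Relation.ReflTransGen.single h2)
      refine h1.trans ?_
      simpa [List.append_assoc] using h3

lemma sub1_flatten {M : List (List ℕ)} {s : List ℕ} {i : ℕ} (hi : i < M.length)
    (hs : s <+ M[i]) : s <+ M.flatten :=
  hs.trans (List.sublist_flatten_of_mem (List.getElem_mem hi))

lemma sub2_flatten {M : List (List ℕ)} {s t : List ℕ} {i j : ℕ} (hij : i < j)
    (hj : j < M.length) (hs : s <+ M[i]'(by omega)) (ht : t <+ M[j]) :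
    s ++ t <+ M.flatten := by
  have hsplit : M.flatten = (M.take (i+1)).flatten ++ (M.drop (i+1)).flatten := by
    rw [← List.flatten_append, List.take_append_drop]
  rw [hsplit]
  refine List.Sublist.append ?_ ?_
  · refine sub1_flatten (M := M.take (i+1)) (i := i) (by simp; omega) ?_
    simpa [List.getElem_take] using hs
  · refine sub1_flatten (M := M.drop (i+1)) (i := j - (i+1)) (by simp; omega) ?_
    have : (M.drop (i+1))[j - (i+1)]'(by simp; omega) = M[j] := by
      rw [List.getElem_drop]
      congr 1
      omega
    rwa [this]

lemma sub3_flatten {M : List (List ℕ)} {s t u : List ℕ} {i j k : ℕ} (hij : i < j) (hjk : j < k)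
    (hk : k < M.length) (hs : s <+ M[i]'(by omega)) (ht : t <+ M[j]'(by omega)) (hu : u <+ M[k]) :
    s ++ t ++ u <+ M.flatten := by
  have hsplit : M.flatten = (M.take (i+1)).flatten ++ (M.drop (i+1)).flatten := by
    rw [← List.flatten_append, List.take_append_drop]
  rw [hsplit, List.append_assoc]
  refine List.Sublist.append ?_ ?_
  · refine sub1_flatten (M := M.take (i+1)) (i := i) (by simp; omega) ?_
    simpa [List.getElem_take] using hs
  · refine sub2_flatten (M := M.drop (i+1)) (i := j - (i+1)) (j := k - (i+1)) (by omega)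
      (by simp; omega) ?_ ?_
    · have : (M.drop (i+1))[j - (i+1)]'(by simp; omega) = M[j]'(by omega) := by
        rw [List.getElem_drop]; congr 1; omega
      rwa [this]
    · have : (M.drop (i+1))[k - (i+1)]'(by simp; omega) = M[k] := by
        rw [List.getElem_drop]; congr 1; omega
      rwa [this]

lemma decomp1 {c : ℕ} {M : List (List ℕ)} (h : [c] <+ M.flatten) :
    ∃ i, ∃ hi : i < M.length, c ∈ M[i] := by
  have hc : c ∈ M.flatten := h.subset (by simp)
  obtain ⟨l, hl, hcl⟩ := List.mem_flatten.mp hc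
  obtain ⟨⟨i, hi⟩, rfl⟩ := List.mem_iff_get.mp hl
  exact ⟨i, hi, hcl⟩

lemma decomp2 {b c : ℕ} {M : List (List ℕ)} (h : [b,c] <+ M.flatten) :
    (∃ i, ∃ hi : i < M.length, [b,c] <+ M[i]) ∨
    (∃ i j, ∃ hj : j < M.length, ∃ hij : i < j, b ∈ M[i]'(by omega) ∧ c ∈ M[j]) := by
  induction M with
  | nil => simp at h
  | cons B M ih =>
      rw [List.flatten_cons, List.sublist_append_iff] at h
      obtain ⟨s1, s2, heq, h1, h2⟩ := h
      rcases s1 with _ | ⟨x, _ | ⟨y, _ | ⟨z, s1⟩⟩⟩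
      · simp only [List.nil_append] at heq
        subst heq
        rcases ih h2 with ⟨i, hi, h'⟩ | ⟨i, j, hj, hij, hb, hc⟩
        · exact Or.inl ⟨i+1, by simpa using hi, by simpa using h'⟩
        · exact Or.inr ⟨i+1, j+1, by simpa using hj, by omega, by simpa using hb, by simpa using hc⟩
      · injection heq with e1 e2
        subst e1
        have : s2 = [c] := by simpa using e2.symm
        subst this
        obtain ⟨j, hj, hc⟩ := decomp1 h2
        exact Or.inr ⟨0, j+1, by simpa using hj, by omega,
          List.singleton_sublist.mp h1, by simpa using hc⟩
      · injection heq with e1 e2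
        injection e2 with e3 e4
        subst e1; subst e3
        exact Or.inl ⟨0, by simp, h1⟩
      · injection heq with e1 e2
        injection e2 with e3 e4
        simp at e4

lemma decomp3 {a b c : ℕ} {M : List (List ℕ)} (h : [a,b,c] <+ M.flatten) :
    (∃ i, ∃ hi : i < M.length, [a,b,c] <+ M[i]) ∨
    (∃ i j, ∃ hj : j < M.length, ∃ hij : i < j, a ∈ M[i]'(by omega) ∧ [b,c] <+ M[j]) ∨
    (∃ i j, ∃ hj : j < M.length, ∃ hij : i < j, [a,b] <+ M[i]'(by omega) ∧ c ∈ M[j]) ∨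
    (∃ i j k, ∃ hk : k < M.length, ∃ hij : i < j, ∃ hjk : j < k,
      a ∈ M[i]'(by omega) ∧ b ∈ M[j]'(by omega) ∧ c ∈ M[k]) := by
  induction M with
  | nil => simp at h
  | cons B M ih =>
      rw [List.flatten_cons, List.sublist_append_iff] at h
      obtain ⟨s1, s2, heq, h1, h2⟩ := h
      rcases s1 with _ | ⟨x, _ | ⟨y, _ | ⟨z, _ | ⟨w, s1⟩⟩⟩⟩
      · simp only [List.nil_append] at heq
        subst heq
        rcases ih h2 with ⟨i, hi, h'⟩ | ⟨i, j, hj, hij, ha, h'⟩ |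
          ⟨i, j, hj, hij, h', hc⟩ | ⟨i, j, k, hk, hij, hjk, ha, hb, hc⟩
        · exact Or.inl ⟨i+1, by simpa using hi, by simpa using h'⟩
        · exact Or.inr <| Or.inl ⟨i+1, j+1, by simpa using hj, by omega,
            by simpa using ha, by simpa using h'⟩
        · exact Or.inr <| Or.inr <| Or.inl ⟨i+1, j+1, by simpa using hj, by omega,
            by simpa using h', by simpa using hc⟩
        · exact Or.inr <| Or.inr <| Or.inr ⟨i+1, j+1, k+1, by simpa using hk, by omega, by omega,
            by simpa using ha, by simpa using hb, by simpa using hc⟩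
      · injection heq with e1 e2
        subst e1
        have hs2 : s2 = [b, c] := by simpa using e2.symm
        subst hs2
        rcases decomp2 h2 with ⟨j, hj, h'⟩ | ⟨j, k, hk, hjk, hb, hc⟩
        · exact Or.inr <| Or.inl ⟨0, j+1, by simpa using hj, by omega,
            List.singleton_sublist.mp h1, by simpa using h'⟩
        · exact Or.inr <| Or.inr <| Or.inr ⟨0, j+1, k+1, by simpa using hk, by omega, by omega,
            List.singleton_sublist.mp h1, by simpa using hb, by simpa using hc⟩
      · injection heq with e1 e2
        injection e2 with e3 e4
        subst e1; subst e3
        have hs2 : s2 = [c] := by simpa using e4.symm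
        subst hs2
        obtain ⟨j, hj, hc⟩ := decomp1 h2
        exact Or.inr <| Or.inr <| Or.inl ⟨0, j+1, by simpa using hj, by omega,
          h1, by simpa using hc⟩
      · injection heq with e1 e2
        injection e2 with e3 e4
        injection e4 with e5 e6
        subst e1; subst e3; subst e5
        exact Or.inl ⟨0, by simp, h1⟩
      · injection heq with e1 e2
        injection e2 with e3 e4
        injection e4 with e5 e6
        simp at e6

lemma rev_sub {s B : List ℕ} (h : s.reverse <+ B) : s <+ B.reverse := by
  simpa using h.reverse

lemma rev_sub' {s B : List ℕ} (h : s <+ B.reverse) : s.reverse <+ B := by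
  simpa using h.reverse

lemma d1 {bs : List (List ℕ)} (h : DividedContains bs [[1,3,2]]) :
    Has231 ((bs.map List.reverse).flatten) := by
  obtain ⟨g, hg, ch, hsub, hlen, hiso⟩ := h
  set i0 : Fin ([[1,3,2]] : List (List ℕ)).length := ⟨0, by norm_num⟩ with hi0
  have hflat : (List.ofFn ch).flatten = ch i0 := by
    simp [List.ofFn_succ, hi0]
  rw [hflat] at hiso
  obtain ⟨hl, hcmp⟩ := hiso
  simp at hl
  match hc : ch i0, hl with
  | [u,v,w], _ =>
    rw [hc] at hcmp
    have h1 : u < w := by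
      have := (hcmp 0 2 (by simp) (by simp)).mpr (by simp [List.getD])
      simpa [List.getD] using this
    have h2 : w < v := by
      have := (hcmp 2 1 (by simp) (by simp)).mpr (by simp [List.getD])
      simpa [List.getD] using this
    have hs : [u,v,w] <+ bs.get (g i0) := hc ▸ hsub i0
    have hs' : [w,v,u] <+ (bs.map List.reverse)[(g i0).val]'(by simp [(g i0).isLt]) := by
      rw [List.getElem_map]
      exact rev_sub (by simpa using hs)
    exact ⟨w, v, u, h1, h2, by
      exact (sub1_flatten (by simp [(g i0).isLt]) hs' : _)⟩

lemma d2 {bs : List (List ℕ)} (h : DividedContains bs [[2],[1,3]]) :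
    Has231 ((bs.map List.reverse).flatten) := by
  obtain ⟨g, hg, ch, hsub, hlen, hiso⟩ := h
  set i0 : Fin ([[2],[1,3]] : List (List ℕ)).length := ⟨0, by norm_num⟩ with hi0
  set i1 : Fin ([[2],[1,3]] : List (List ℕ)).length := ⟨1, by norm_num⟩ with hi1
  have hflat : (List.ofFn ch).flatten = ch i0 ++ ch i1 := by
    simp [List.ofFn_succ, hi0, hi1, Fin.succ]
  rw [hflat] at hiso
  have hl0 : (ch i0).length = 1 := by exact hlen i0
  have hl1 : (ch i1).length = 2 := by exact hlen i1
  obtain ⟨hl, hcmp⟩ := hiso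
  match hc0 : ch i0, hl0 with
  | [x], _ =>
  match hc1 : ch i1, hl1 with
  | [y,z], _ =>
    rw [hc0, hc1] at hcmp
    simp only [List.cons_append, List.nil_append] at hcmp
    have h1 : y < x := by
      have := (hcmp 1 0 (by simp [hc0,hc1]) (by simp [hc0,hc1])).mpr (by simp [List.getD])
      simpa [List.getD] using this
    have h2 : x < z := by
      have := (hcmp 0 2 (by simp [hc0,hc1]) (by simp [hc0,hc1])).mpr (by simp [List.getD])
      simpa [List.getD] using this
    have hmono : (g i0).val < (g i1).val := hg (by simp [hi0, hi1, Fin.lt_def])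
    have hs0 : [x] <+ (bs.map List.reverse)[(g i0).val]'(by simp [(g i0).isLt]) := by
      rw [List.getElem_map]
      exact rev_sub (by simpa using (hc0 ▸ hsub i0 : [x] <+ bs.get (g i0)))
    have hs1 : [z,y] <+ (bs.map List.reverse)[(g i1).val]'(by simp [(g i1).isLt]) := by
      rw [List.getElem_map]
      exact rev_sub (by simpa using (hc1 ▸ hsub i1 : [y,z] <+ bs.get (g i1)))
    exact ⟨x, z, y, h1, h2, sub2_flatten hmono (by simp [(g i1).isLt]) hs0 hs1⟩

lemma d3 {bs : List (List ℕ)} (h : DividedContains bs [[3,2],[1]]) :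
    Has231 ((bs.map List.reverse).flatten) := by
  obtain ⟨g, hg, ch, hsub, hlen, hiso⟩ := h
  set i0 : Fin ([[3,2],[1]] : List (List ℕ)).length := ⟨0, by norm_num⟩ with hi0
  set i1 : Fin ([[3,2],[1]] : List (List ℕ)).length := ⟨1, by norm_num⟩ with hi1
  have hflat : (List.ofFn ch).flatten = ch i0 ++ ch i1 := by
    simp [List.ofFn_succ, hi0, hi1, Fin.succ]
  rw [hflat] at hiso
  have hl0 : (ch i0).length = 2 := by exact hlen i0
  have hl1 : (ch i1).length = 1 := by exact hlen i1
  obtain ⟨hl, hcmp⟩ := hiso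
  match hc0 : ch i0, hl0 with
  | [x,y], _ =>
  match hc1 : ch i1, hl1 with
  | [z], _ =>
    rw [hc0, hc1] at hcmp
    simp only [List.cons_append, List.nil_append] at hcmp
    have h1 : y < x := by
      have := (hcmp 1 0 (by simp [hc0,hc1]) (by simp [hc0,hc1])).mpr (by simp [List.getD])
      simpa [List.getD] using this
    have h2 : z < y := by
      have := (hcmp 2 1 (by simp [hc0,hc1]) (by simp [hc0,hc1])).mpr (by simp [List.getD])
      simpa [List.getD] using this
    have hmono : (g i0).val < (g i1).val := hg (by simp [hi0, hi1, Fin.lt_def])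
    have hs0 : [y,x] <+ (bs.map List.reverse)[(g i0).val]'(by simp [(g i0).isLt]) := by
      rw [List.getElem_map]
      exact rev_sub (by simpa using (hc0 ▸ hsub i0 : [x,y] <+ bs.get (g i0)))
    have hs1 : [z] <+ (bs.map List.reverse)[(g i1).val]'(by simp [(g i1).isLt]) := by
      rw [List.getElem_map]
      exact rev_sub (by simpa using (hc1 ▸ hsub i1 : [z] <+ bs.get (g i1)))
    exact ⟨y, x, z, h2, h1, sub2_flatten hmono (by simp [(g i1).isLt]) hs0 hs1⟩

lemma d4 {bs : List (List ℕ)} (h : DividedContains bs [[2],[3],[1]]) :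
    Has231 ((bs.map List.reverse).flatten) := by
  obtain ⟨g, hg, ch, hsub, hlen, hiso⟩ := h
  set i0 : Fin ([[2],[3],[1]] : List (List ℕ)).length := ⟨0, by norm_num⟩ with hi0
  set i1 : Fin ([[2],[3],[1]] : List (List ℕ)).length := ⟨1, by norm_num⟩ with hi1
  set i2 : Fin ([[2],[3],[1]] : List (List ℕ)).length := ⟨2, by norm_num⟩ with hi2
  have hflat : (List.ofFn ch).flatten = ch i0 ++ (ch i1 ++ ch i2) := by
    simp [List.ofFn_succ, hi0, hi1, hi2, Fin.succ]
  rw [hflat] at hiso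
  have hl0 : (ch i0).length = 1 := by exact hlen i0
  have hl1 : (ch i1).length = 1 := by exact hlen i1
  have hl2 : (ch i2).length = 1 := by exact hlen i2
  obtain ⟨hl, hcmp⟩ := hiso
  match hc0 : ch i0, hl0 with
  | [x], _ =>
  match hc1 : ch i1, hl1 with
  | [y], _ =>
  match hc2 : ch i2, hl2 with
  | [z], _ =>
    rw [hc0, hc1, hc2] at hcmp
    simp only [List.cons_append, List.nil_append] at hcmp
    have h1 : x < y := by
      have := (hcmp 0 1 (by simp) (by simp)).mpr (by simp [List.getD])
      simpa [List.getD] using this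
    have h2 : z < x := by
      have := (hcmp 2 0 (by simp) (by simp)).mpr (by simp [List.getD])
      simpa [List.getD] using this
    have hm1 : (g i0).val < (g i1).val := hg (by simp [hi0, hi1, Fin.lt_def])
    have hm2 : (g i1).val < (g i2).val := hg (by simp [hi1, hi2, Fin.lt_def])
    have hs0 : [x] <+ (bs.map List.reverse)[(g i0).val]'(by simp [(g i0).isLt]) := by
      rw [List.getElem_map]
      exact rev_sub (by simpa using (hc0 ▸ hsub i0 : [x] <+ bs.get (g i0)))
    have hs1 : [y] <+ (bs.map List.reverse)[(g i1).val]'(by simp [(g i1).isLt]) := by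
      rw [List.getElem_map]
      exact rev_sub (by simpa using (hc1 ▸ hsub i1 : [y] <+ bs.get (g i1)))
    have hs2 : [z] <+ (bs.map List.reverse)[(g i2).val]'(by simp [(g i2).isLt]) := by
      rw [List.getElem_map]
      exact rev_sub (by simpa using (hc2 ▸ hsub i2 : [z] <+ bs.get (g i2)))
    exact ⟨x, y, z, h2, h1, sub3_flatten hm1 hm2 (by simp [(g i2).isLt]) hs0 hs1 hs2⟩

lemma fin1_mono {m : ℕ} (g : Fin ([[1,3,2]] : List (List ℕ)).length → Fin m) : StrictMono g := by
  intro x y hxy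
  rcases x with ⟨xv, hx⟩; rcases y with ⟨yv, hy⟩
  simp at hx hy
  simp [Fin.lt_def] at hxy
  omega

lemma e_lemma {bs : List (List ℕ)} (h : Has231 ((bs.map List.reverse).flatten)) :
    DividedContains bs [[1,3,2]] ∨ DividedContains bs [[2],[1,3]] ∨
    DividedContains bs [[3,2],[1]] ∨ DividedContains bs [[2],[3],[1]] := by
  obtain ⟨a, b, c, hca, hab, hsub⟩ := h
  have hMlen : (bs.map List.reverse).length = bs.length := by simp
  rcases decomp3 hsub with ⟨i, hi, h'⟩ | ⟨i, j, hj, hij, ha, h'⟩ |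
    ⟨i, j, hj, hij, h', hc⟩ | ⟨i, j, k, hk, hij, hjk, ha, hb, hc⟩
  · -- all in one block: 132
    left
    have hi' : i < bs.length := by omega
    have hsb : [c,b,a] <+ bs[i] := by
      have := rev_sub' (by simpa [List.getElem_map] using h' : [a,b,c] <+ (bs[i]).reverse)
      simpa using this
    refine ⟨fun _ => ⟨i, hi'⟩, fin1_mono _, fun _ => [c,b,a], ?_, ?_, ?_, ?_⟩
    · intro t; simpa using hsb
    · intro t
      rcases t with ⟨tv, ht⟩
      simp at ht
      subst ht
      simp
    · simp [List.ofFn_succ]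
    · intro i' j' hi' hj'
      simp [List.ofFn_succ] at hi' hj' ⊢
      interval_cases i' <;> interval_cases j' <;> simp [List.getD] <;> omega
  · -- a alone, then b c together : 2 | 13
    right; left
    have hi' : i < bs.length := by omega
    have hj' : j < bs.length := by omega
    have hsb : [c,b] <+ bs[j] := by
      have := rev_sub' (by simpa [List.getElem_map] using h' : [b,c] <+ (bs[j]).reverse)
      simpa using this
    have hsa : [a] <+ bs[i] := by
      have : a ∈ (bs[i]).reverse := by simpa [List.getElem_map] using ha
      exact List.singleton_sublist.mpr (by simpa using this)
    refine ⟨fun t => if t.val = 0 then ⟨i, hi'⟩ else ⟨j, hj'⟩, ?_,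
      fun t => if t.val = 0 then [a] else [c,b], ?_, ?_, ?_, ?_⟩
    · intro x y hxy
      rcases x with ⟨xv, hx⟩; rcases y with ⟨yv, hy⟩
      simp at hx hy
      simp [Fin.lt_def] at hxy
      have hx0 : xv = 0 := by omega
      have hy1 : yv = 1 := by omega
      subst hx0; subst hy1
      simpa [Fin.lt_def] using hij
    · intro t
      rcases t with ⟨tv, ht⟩
      simp at ht
      interval_cases tv
      · simpa using List.singleton_sublist.mp hsa
      · simpa using hsb
    · intro t
      rcases t with ⟨tv, ht⟩
      simp at ht
      interval_cases tv <;> simp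
    · simp [List.ofFn_succ]
    · intro i' j' hi' hj'
      simp [List.ofFn_succ] at hi' hj' ⊢
      interval_cases i' <;> interval_cases j' <;> simp [List.getD] <;> omega
  · -- a b together, then c : 32 | 1
    right; right; left
    have hi' : i < bs.length := by omega
    have hj' : j < bs.length := by omega
    have hsb : [b,a] <+ bs[i] := by
      have := rev_sub' (by simpa [List.getElem_map] using h' : [a,b] <+ (bs[i]).reverse)
      simpa using this
    have hsc : [c] <+ bs[j] := by
      have : c ∈ (bs[j]).reverse := by simpa [List.getElem_map] using hc
      exact List.singleton_sublist.mpr (by simpa using this)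
    refine ⟨fun t => if t.val = 0 then ⟨i, hi'⟩ else ⟨j, hj'⟩, ?_,
      fun t => if t.val = 0 then [b,a] else [c], ?_, ?_, ?_, ?_⟩
    · intro x y hxy
      rcases x with ⟨xv, hx⟩; rcases y with ⟨yv, hy⟩
      simp at hx hy
      simp [Fin.lt_def] at hxy
      have hx0 : xv = 0 := by omega
      have hy1 : yv = 1 := by omega
      subst hx0; subst hy1
      simpa [Fin.lt_def] using hij
    · intro t
      rcases t with ⟨tv, ht⟩
      simp at ht
      interval_cases tv
      · simpa using hsb
      · simpa using List.singleton_sublist.mp hsc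
    · intro t
      rcases t with ⟨tv, ht⟩
      simp at ht
      interval_cases tv <;> simp
    · simp [List.ofFn_succ]
    · intro i' j' hi' hj'
      simp [List.ofFn_succ] at hi' hj' ⊢
      interval_cases i' <;> interval_cases j' <;> simp [List.getD] <;> omega
  · -- all separate : 2 | 3 | 1
    right; right; right
    have hi' : i < bs.length := by omega
    have hj' : j < bs.length := by omega
    have hk' : k < bs.length := by omega
    have hsa : [a] <+ bs[i] := by
      have : a ∈ (bs[i]).reverse := by simpa [List.getElem_map] using ha
      exact List.singleton_sublist.mpr (by simpa using this)
    have hsb : [b] <+ bs[j] := by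
      have : b ∈ (bs[j]).reverse := by simpa [List.getElem_map] using hb
      exact List.singleton_sublist.mpr (by simpa using this)
    have hsc : [c] <+ bs[k] := by
      have : c ∈ (bs[k]).reverse := by simpa [List.getElem_map] using hc
      exact List.singleton_sublist.mpr (by simpa using this)
    refine ⟨fun t => if t.val = 0 then ⟨i, hi'⟩ else if t.val = 1 then ⟨j, hj'⟩ else ⟨k, hk'⟩, ?_,
      fun t => if t.val = 0 then [a] else if t.val = 1 then [b] else [c], ?_, ?_, ?_, ?_⟩
    · intro x y hxy
      rcases x with ⟨xv, hx⟩; rcases y with ⟨yv, hy⟩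
      simp at hx hy
      simp [Fin.lt_def] at hxy
      interval_cases xv <;> interval_cases yv <;> simp [Fin.lt_def] <;> omega
    · intro t
      rcases t with ⟨tv, ht⟩
      simp at ht
      interval_cases tv
      · simpa using List.singleton_sublist.mp hsa
      · simpa using List.singleton_sublist.mp hsb
      · simpa using List.singleton_sublist.mp hsc
    · intro t
      rcases t with ⟨tv, ht⟩
      simp at ht
      interval_cases tv <;> simp
    · simp [List.ofFn_succ]
    · intro i' j' hi' hj'
      simp [List.ofFn_succ] at hi' hj' ⊢
      interval_cases i' <;> interval_cases j' <;> simp [List.getD] <;> omega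


lemma flatten_map_reverse_perm (bs : List (List ℕ)) :
    ((bs.map List.reverse).flatten).Perm bs.flatten := by
  induction bs with
  | nil => simp
  | cons b bs ih => simpa using List.Perm.append (List.reverse_perm b) ih

theorem stmt15 (p : List ℕ) (hp : IsPermList p) :
    PQSSortable p ↔
      ∃ bs, IsDivision p bs ∧ ¬ DividedContains bs [[1, 3, 2]] ∧
        ¬ DividedContains bs [[2], [1, 3]] ∧ ¬ DividedContains bs [[3, 2], [1]] ∧
        ¬ DividedContains bs [[2], [3], [1]] := by
  constructor
  · intro hsort
    obtain ⟨w, hbw, hrun⟩ := extract (List.range' 1 p.length) (p, [], [], [], []) hsort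
    obtain ⟨c, cs, hp1, hp2, hp3⟩ := bw_division hbw
    have hGood := good p.length ([],[],w,[],[]) (by simpa using hrun) rfl rfl
    obtain ⟨t, -, -, -, -, -, h231⟩ := hGood
    rcases eq_or_ne c [] with rfl | hc
    · have hw : w = (cs.map List.reverse).flatten := by simpa using hp3
      refine ⟨cs, ⟨by simpa using hp1.symm, hp2⟩, ?_, ?_, ?_, ?_⟩
      · exact fun hdc => h231 (hw ▸ d1 hdc)
      · exact fun hdc => h231 (hw ▸ d2 hdc)
      · exact fun hdc => h231 (hw ▸ d3 hdc)
      · exact fun hdc => h231 (hw ▸ d4 hdc)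
    · have hw : w = ((c :: cs).map List.reverse).flatten := by simpa using hp3
      refine ⟨c :: cs, ⟨by simpa using hp1.symm, ?_⟩, ?_, ?_, ?_, ?_⟩
      · intro b hb
        rcases List.mem_cons.mp hb with rfl | hb'
        · exact hc
        · exact hp2 b hb'
      · exact fun hdc => h231 (hw ▸ d1 hdc)
      · exact fun hdc => h231 (hw ▸ d2 hdc)
      · exact fun hdc => h231 (hw ▸ d3 hdc)
      · exact fun hdc => h231 (hw ▸ d4 hdc)
  · rintro ⟨bs, ⟨hflat, hne⟩, h1, h2, h3, h4⟩
    set w := (bs.map List.reverse).flatten with hw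
    have h231 : ¬ Has231 w := fun h =>
      (e_lemma h).elim h1 (fun h' => h'.elim h2 (fun h'' => h''.elim h3 h4))
    have hwp : w.Perm (List.range' 1 p.length) := by
      refine ((flatten_map_reverse_perm bs).trans ?_).trans hp
      rw [hflat]
    have run1 : Relation.ReflTransGen PQSStep (p,[],[],[],[]) ([],[],w,[],[]) := by
      have := load bs hne [] [] []
      rw [hflat] at this
      simpa using this
    have run2 := greedy p.length (2 * w.length) w [] [] (by simp)
      ⟨0, Nat.zero_le _, by simp, by simpa using hwp, by simp, fun s hs => by simp at hs, h231⟩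
    exact run1.trans run2
end

section
/- If a permutation passes through a pop stack whose full-pop moments are given by a division π = π₁|π₂|⋯|π_t, then the resulting queue content is π₁ʳ π₂ʳ ⋯ π_tʳ (each block reversed), and this concatenation avoids 231 if and only if the divided permutation π₁|⋯|π_t avoids the divided patterns 132, 2|13, 32|1, and 2|3|1. -/
/-! ### Auxiliary lemmas -/

section Aux

/-- Pushing a block of input onto the pop stack. -/
lemma push_block (b : List ℕ) : ∀ (inp ps q : List ℕ),
    Relation.ReflTransGen PQSStep (b ++ inp, ps, q, [], []) (inp, b.reverse ++ ps, q, [], []) := by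
  induction b with
  | nil =>
    intro inp ps q
    simp only [List.nil_append, List.reverse_nil]
    exact Relation.ReflTransGen.refl
  | cons x b ih =>
    intro inp ps q
    refine Relation.ReflTransGen.head (PQSStep.input x (b ++ inp) ps q [] []) ?_
    simpa using ih inp (x :: ps) q

/-- Processing one block: push it all, then pop wholesale into the queue. -/
lemma machine_block (b : List ℕ) (hb : b ≠ []) (inp q : List ℕ) :
    Relation.ReflTransGen PQSStep (b ++ inp, [], q, [], []) (inp, [], q ++ b.reverse, [], []) := by
  have h1 := push_block b inp [] q
  simp only [List.append_nil] at h1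
  exact h1.trans (Relation.ReflTransGen.single
    (PQSStep.pop inp b.reverse q [] [] (by simpa using hb)))

lemma machine_all : ∀ (bs : List (List ℕ)) (q : List ℕ), (∀ b ∈ bs, b ≠ []) →
    Relation.ReflTransGen PQSStep (bs.flatten, [], q, [], [])
      ([], [], q ++ (bs.map List.reverse).flatten, [], []) := by
  intro bs
  induction bs with
  | nil => intro q _; simpa using Relation.ReflTransGen.refl
  | cons b bs ih =>
    intro q hb
    have h1 := machine_block b (hb b (by simp)) bs.flatten q
    have h2 := ih (q ++ b.reverse) (fun b' h' => hb b' (by simp [h']))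
    have := h1.trans h2
    simpa [List.append_assoc] using this

/-- Destructing lists of small lengths. -/
lemma len1 {c : List ℕ} (h : c.length = 1) : ∃ a, c = [a] := by
  obtain _|⟨a, c⟩ := c; · simp at h
  obtain _|⟨b, c⟩ := c; · exact ⟨a, rfl⟩
  · simp at h

lemma len2 {c : List ℕ} (h : c.length = 2) : ∃ a b, c = [a, b] := by
  obtain _|⟨a, c⟩ := c; · simp at h
  obtain _|⟨b, c⟩ := c; · simp at h
  obtain _|⟨x, c⟩ := c; · exact ⟨a, b, rfl⟩
  · simp at h

lemma len3 {c : List ℕ} (h : c.length = 3) : ∃ a b d, c = [a, b, d] := by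
  obtain _|⟨a, c⟩ := c; · simp at h
  obtain _|⟨b, c⟩ := c; · simp at h
  obtain _|⟨d, c⟩ := c; · simp at h
  obtain _|⟨x, c⟩ := c; · exact ⟨a, b, d, rfl⟩
  · simp at h

/-- Building a 3-element order isomorphism. -/
lemma iso3_of {x y z p q r : ℕ}
    (h1 : x < y ↔ p < q) (h2 : y < x ↔ q < p)
    (h3 : x < z ↔ p < r) (h4 : z < x ↔ r < p)
    (h5 : y < z ↔ q < r) (h6 : z < y ↔ r < q) :
    OrderIsoList [x, y, z] [p, q, r] := by
  refine ⟨rfl, ?_⟩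
  intro i j hi hj
  simp only [List.length_cons, List.length_nil] at hi hj
  interval_cases i <;> interval_cases j <;> simp_all

/-- Destructing a 3-element order isomorphism. -/
lemma iso3_dest {s : List ℕ} {p q r : ℕ} (h : OrderIsoList s [p, q, r]) :
    ∃ x y z, s = [x, y, z] ∧ (x < y ↔ p < q) ∧ (y < x ↔ q < p) ∧
      (x < z ↔ p < r) ∧ (z < x ↔ r < p) ∧ (y < z ↔ q < r) ∧ (z < y ↔ r < q) := by
  obtain ⟨hl, hiso⟩ := h
  obtain ⟨x, y, z, rfl⟩ := len3 (by simpa using hl)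
  refine ⟨x, y, z, rfl, ?_, ?_, ?_, ?_, ?_, ?_⟩
  · simpa using hiso 0 1 (by simp) (by simp)
  · simpa using hiso 1 0 (by simp) (by simp)
  · simpa using hiso 0 2 (by simp) (by simp)
  · simpa using hiso 2 0 (by simp) (by simp)
  · simpa using hiso 1 2 (by simp) (by simp)
  · simpa using hiso 2 1 (by simp) (by simp)

lemma iso3_dest' {a b c p q r : ℕ} (h : OrderIsoList [a, b, c] [p, q, r]) :
    (a < b ↔ p < q) ∧ (b < a ↔ q < p) ∧ (a < c ↔ p < r) ∧ (c < a ↔ r < p) ∧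
      (b < c ↔ q < r) ∧ (c < b ↔ r < q) := by
  obtain ⟨-, hiso⟩ := h
  exact ⟨by simpa using hiso 0 1 (by simp) (by simp), by simpa using hiso 1 0 (by simp) (by simp),
    by simpa using hiso 0 2 (by simp) (by simp), by simpa using hiso 2 0 (by simp) (by simp),
    by simpa using hiso 1 2 (by simp) (by simp), by simpa using hiso 2 1 (by simp) (by simp)⟩

lemma contains231_iff (w : List ℕ) :
    ContainsPat w [2, 3, 1] ↔ ∃ x y z, [x, y, z].Sublist w ∧ z < x ∧ x < y := by
  constructor
  · rintro ⟨s, hs, hiso⟩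
    obtain ⟨x, y, z, rfl, hxy, -, -, hzx, -, -⟩ := iso3_dest hiso
    exact ⟨x, y, z, hs, hzx.mpr (by norm_num), hxy.mpr (by norm_num)⟩
  · rintro ⟨x, y, z, hs, h1, h2⟩
    exact ⟨[x, y, z], hs, iso3_of (by omega) (by omega) (by omega) (by omega)
      (by omega) (by omega)⟩

/-- Decomposing a sublist of a flatten blockwise. -/
lemma decomp : ∀ (L : List (List ℕ)) (s : List ℕ), s.Sublist L.flatten →
    ∃ ss : List (List ℕ), ss.length = L.length ∧
      (∀ i, (ss.getD i []).Sublist (L.getD i [])) ∧ ss.flatten = s := by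
  intro L
  induction L with
  | nil =>
    intro s hs
    refine ⟨[], rfl, by simp, ?_⟩
    simpa using List.sublist_nil.mp (by simpa using hs)
  | cons b L ih =>
    intro s hs
    rw [List.flatten_cons, List.sublist_append_iff] at hs
    obtain ⟨s1, s2, rfl, h1, h2⟩ := hs
    obtain ⟨ss, hlen, hsub, hfl⟩ := ih s2 h2
    refine ⟨s1 :: ss, by simp [hlen], ?_, by simp [hfl]⟩
    intro i
    cases i with
    | zero => simpa using h1
    | succ n => simpa using hsub n

lemma pos1 : ∀ (ss : List (List ℕ)) (a : ℕ), ss.flatten = [a] →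
    ∃ i, i < ss.length ∧ ss.getD i [] = [a] := by
  intro ss
  induction ss with
  | nil => intro a h; simp at h
  | cons t ss ih =>
    intro a h
    rw [List.flatten_cons] at h
    obtain _|⟨x, t⟩ := t
    · obtain ⟨i, hi, hg⟩ := ih a (by simpa using h)
      exact ⟨i + 1, by simpa using hi, by simpa using hg⟩
    obtain _|⟨y, t⟩ := t
    · have hx : x = a ∧ ss.flatten = [] := by simpa using h
      exact ⟨0, by simp, by simp [hx.1]⟩
    · simp at h

lemma pos2 : ∀ (ss : List (List ℕ)) (a b : ℕ), ss.flatten = [a, b] →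
    (∃ i, i < ss.length ∧ ss.getD i [] = [a, b]) ∨
    (∃ i j, i < j ∧ j < ss.length ∧ ss.getD i [] = [a] ∧ ss.getD j [] = [b]) := by
  intro ss
  induction ss with
  | nil => intro a b h; simp at h
  | cons t ss ih =>
    intro a b h
    rw [List.flatten_cons] at h
    obtain _|⟨x, t⟩ := t
    · rcases ih a b (by simpa using h) with ⟨i, hi, hg⟩ | ⟨i, j, hij, hj, hgi, hgj⟩
      · exact Or.inl ⟨i + 1, by simpa using hi, by simpa using hg⟩
      · exact Or.inr ⟨i + 1, j + 1, by omega, by simpa using hj, by simpa using hgi,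
          by simpa using hgj⟩
    obtain _|⟨y, t⟩ := t
    · have hx : x = a ∧ ss.flatten = [b] := by simpa using h
      obtain ⟨j, hj, hgj⟩ := pos1 ss b hx.2
      exact Or.inr ⟨0, j + 1, by omega, by simpa using hj, by simp [hx.1], by simpa using hgj⟩
    obtain _|⟨z, t⟩ := t
    · have hx : x = a ∧ y = b ∧ ss.flatten = [] := by simpa using h
      exact Or.inl ⟨0, by simp, by simp [hx.1, hx.2.1]⟩
    · simp at h

lemma pos3 : ∀ (ss : List (List ℕ)) (a b c : ℕ), ss.flatten = [a, b, c] →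
    (∃ i, i < ss.length ∧ ss.getD i [] = [a, b, c]) ∨
    (∃ i j, i < j ∧ j < ss.length ∧ ss.getD i [] = [a, b] ∧ ss.getD j [] = [c]) ∨
    (∃ i j, i < j ∧ j < ss.length ∧ ss.getD i [] = [a] ∧ ss.getD j [] = [b, c]) ∨
    (∃ i j k, i < j ∧ j < k ∧ k < ss.length ∧ ss.getD i [] = [a] ∧ ss.getD j [] = [b] ∧
      ss.getD k [] = [c]) := by
  intro ss
  induction ss with
  | nil => intro a b c h; simp at h
  | cons t ss ih =>
    intro a b c h
    rw [List.flatten_cons] at h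
    obtain _|⟨x, t⟩ := t
    · rcases ih a b c (by simpa using h) with ⟨i, hi, hg⟩ | ⟨i, j, hij, hj, hgi, hgj⟩ |
        ⟨i, j, hij, hj, hgi, hgj⟩ | ⟨i, j, k, hij, hjk, hk, hgi, hgj, hgk⟩
      · exact Or.inl ⟨i + 1, by simpa using hi, by simpa using hg⟩
      · exact Or.inr (Or.inl ⟨i + 1, j + 1, by omega, by simpa using hj, by simpa using hgi,
          by simpa using hgj⟩)
      · exact Or.inr (Or.inr (Or.inl ⟨i + 1, j + 1, by omega, by simpa using hj,
          by simpa using hgi, by simpa using hgj⟩))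
      · exact Or.inr (Or.inr (Or.inr ⟨i + 1, j + 1, k + 1, by omega, by omega,
          by simpa using hk, by simpa using hgi, by simpa using hgj, by simpa using hgk⟩))
    obtain _|⟨y, t⟩ := t
    · have hx : x = a ∧ ss.flatten = [b, c] := by simpa using h
      rcases pos2 ss b c hx.2 with ⟨j, hj, hgj⟩ | ⟨j, k, hjk, hk, hgj, hgk⟩
      · exact Or.inr (Or.inr (Or.inl ⟨0, j + 1, by omega, by simpa using hj, by simp [hx.1],
          by simpa using hgj⟩))
      · exact Or.inr (Or.inr (Or.inr ⟨0, j + 1, k + 1, by omega, by omega, by simpa using hk,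
          by simp [hx.1], by simpa using hgj, by simpa using hgk⟩))
    obtain _|⟨z, t⟩ := t
    · have hx : x = a ∧ y = b ∧ ss.flatten = [c] := by simpa using h
      obtain ⟨j, hj, hgj⟩ := pos1 ss c hx.2.2
      exact Or.inr (Or.inl ⟨0, j + 1, by omega, by simpa using hj, by simp [hx.1, hx.2.1],
        by simpa using hgj⟩)
    obtain _|⟨u, t⟩ := t
    · have hx : x = a ∧ y = b ∧ z = c ∧ ss.flatten = [] := by simpa using h
      exact Or.inl ⟨0, by simp, by simp [hx.1, hx.2.1, hx.2.2.1]⟩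
    · simp at h

/-- A sublist of one block is a sublist of the flatten. -/
lemma sub_flatten_one : ∀ (L : List (List ℕ)) (i : ℕ), i < L.length →
    ∀ s : List ℕ, s.Sublist (L.getD i []) → s.Sublist L.flatten := by
  intro L
  induction L with
  | nil => simp
  | cons b L ih =>
    intro i hi s hs
    rw [List.flatten_cons]
    cases i with
    | zero => exact (by simpa using hs : s.Sublist b).trans (List.sublist_append_left _ _)
    | succ n =>
      exact (ih n (by simpa using hi) s (by simpa using hs)).trans
        (List.sublist_append_right _ _)

lemma sub_flatten_two : ∀ (L : List (List ℕ)) (i j : ℕ), i < j → j < L.length →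
    ∀ s t : List ℕ, s.Sublist (L.getD i []) → t.Sublist (L.getD j []) →
      (s ++ t).Sublist L.flatten := by
  intro L
  induction L with
  | nil => simp
  | cons b L ih =>
    intro i j hij hj s t hs ht
    rw [List.flatten_cons]
    obtain ⟨m, rfl⟩ : ∃ m, j = m + 1 := ⟨j - 1, by omega⟩
    cases i with
    | zero =>
      exact List.Sublist.append (by simpa using hs)
        (sub_flatten_one L m (by simpa using hj) t (by simpa using ht))
    | succ n =>
      exact (ih n m (by omega) (by simpa using hj) s t (by simpa using hs)
        (by simpa using ht)).trans (List.sublist_append_right _ _)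

lemma sub_flatten_three : ∀ (L : List (List ℕ)) (i j k : ℕ), i < j → j < k → k < L.length →
    ∀ s t u : List ℕ, s.Sublist (L.getD i []) → t.Sublist (L.getD j []) →
      u.Sublist (L.getD k []) → (s ++ t ++ u).Sublist L.flatten := by
  intro L
  induction L with
  | nil => simp
  | cons b L ih =>
    intro i j k hij hjk hk s t u hs ht hu
    rw [List.flatten_cons]
    obtain ⟨m, rfl⟩ : ∃ m, j = m + 1 := ⟨j - 1, by omega⟩
    obtain ⟨m', rfl⟩ : ∃ m', k = m' + 1 := ⟨k - 1, by omega⟩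
    cases i with
    | zero =>
      rw [List.append_assoc]
      exact List.Sublist.append (by simpa using hs)
        (sub_flatten_two L m m' (by omega) (by simpa using hk) t u (by simpa using ht)
          (by simpa using hu))
    | succ n =>
      exact (ih n m m' (by omega) (by omega) (by simpa using hk) s t u (by simpa using hs)
        (by simpa using ht) (by simpa using hu)).trans (List.sublist_append_right _ _)

/-- Packaging `DividedContains` with one block. -/
lemma dc1_intro {bs : List (List ℕ)} {q1 : List ℕ} {i : ℕ} (hi : i < bs.length) {c1 : List ℕ}
    (h1 : c1.Sublist (bs.getD i [])) (hl : c1.length = q1.length)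
    (hiso : OrderIsoList c1 q1) : DividedContains bs [q1] := by
  refine ⟨fun _ => ⟨i, hi⟩, ?_, fun _ => c1, ?_, ?_, ?_⟩
  · intro a b hab
    have ha : a.val < 1 := by simpa using a.isLt
    have hb : b.val < 1 := by simpa using b.isLt
    rw [Fin.lt_def] at hab
    omega
  · intro j
    have := h1
    rw [List.getD_eq_getElem bs [] hi] at this
    simpa [List.get_eq_getElem] using this
  · intro j
    simpa using hl
  · simpa using hiso

lemma dc1_elim {bs : List (List ℕ)} {q1 : List ℕ} (h : DividedContains bs [q1]) :
    ∃ i, i < bs.length ∧ ∃ c1, c1.Sublist (bs.getD i []) ∧ c1.length = q1.length ∧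
      OrderIsoList c1 q1 := by
  obtain ⟨g, -, ch, hsub, hlen, hiso⟩ := h
  set i0 : Fin ([q1] : List (List ℕ)).length := ⟨0, by simp⟩ with hi0
  refine ⟨(g i0).1, (g i0).2, ch i0, ?_, by simpa using hlen i0, ?_⟩
  · have := hsub i0
    rw [List.getD_eq_getElem bs [] (g i0).2]
    simpa [List.get_eq_getElem] using this
  · have he : (List.ofFn ch).flatten = ch i0 := by
      simp [List.ofFn_succ, hi0]
    rw [he] at hiso
    simpa using hiso

lemma dc2_intro {bs : List (List ℕ)} {q1 q2 : List ℕ} {i j : ℕ} (hij : i < j)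
    (hj : j < bs.length) {c1 c2 : List ℕ}
    (h1 : c1.Sublist (bs.getD i [])) (h2 : c2.Sublist (bs.getD j []))
    (l1 : c1.length = q1.length) (l2 : c2.length = q2.length)
    (hiso : OrderIsoList (c1 ++ c2) (q1 ++ q2)) : DividedContains bs [q1, q2] := by
  have hi : i < bs.length := lt_trans hij hj
  refine ⟨![⟨i, hi⟩, ⟨j, hj⟩], ?_, ![c1, c2], ?_, ?_, ?_⟩
  · intro a b hab
    fin_cases a <;> fin_cases b <;> simp_all [Fin.lt_def] <;> omega
  · intro m
    fin_cases m
    · have := h1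
      rw [List.getD_eq_getElem bs [] hi] at this
      simpa [List.get_eq_getElem] using this
    · have := h2
      rw [List.getD_eq_getElem bs [] hj] at this
      simpa [List.get_eq_getElem] using this
  · intro m; fin_cases m <;> simp [l1, l2]
  · simpa [List.ofFn_succ] using hiso

lemma dc2_elim {bs : List (List ℕ)} {q1 q2 : List ℕ} (h : DividedContains bs [q1, q2]) :
    ∃ i j, i < j ∧ j < bs.length ∧ ∃ c1 c2, c1.Sublist (bs.getD i []) ∧
      c2.Sublist (bs.getD j []) ∧ c1.length = q1.length ∧ c2.length = q2.length ∧
      OrderIsoList (c1 ++ c2) (q1 ++ q2) := by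
  obtain ⟨g, hg, ch, hsub, hlen, hiso⟩ := h
  set i0 : Fin ([q1, q2] : List (List ℕ)).length := ⟨0, by simp⟩ with hi0
  set i1 : Fin ([q1, q2] : List (List ℕ)).length := ⟨1, by simp⟩ with hi1
  have h01 : g i0 < g i1 := hg (by rw [hi0, hi1]; exact Fin.mk_lt_mk.mpr (by omega))
  refine ⟨(g i0).1, (g i1).1, h01, (g i1).2, ch i0, ch i1, ?_, ?_, by simpa [hi0] using hlen i0,
    by simpa [hi1] using hlen i1, ?_⟩
  · have := hsub i0
    rw [List.getD_eq_getElem bs [] (g i0).2]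
    simpa [List.get_eq_getElem] using this
  · have := hsub i1
    rw [List.getD_eq_getElem bs [] (g i1).2]
    simpa [List.get_eq_getElem] using this
  · have he : (List.ofFn ch).flatten = ch i0 ++ ch i1 := by
      simp [List.ofFn_succ, hi0, hi1]
    rw [he] at hiso
    simpa using hiso

lemma dc3_intro {bs : List (List ℕ)} {q1 q2 q3 : List ℕ} {i j k : ℕ} (hij : i < j)
    (hjk : j < k) (hk : k < bs.length) {c1 c2 c3 : List ℕ}
    (h1 : c1.Sublist (bs.getD i [])) (h2 : c2.Sublist (bs.getD j []))
    (h3 : c3.Sublist (bs.getD k []))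
    (l1 : c1.length = q1.length) (l2 : c2.length = q2.length) (l3 : c3.length = q3.length)
    (hiso : OrderIsoList (c1 ++ c2 ++ c3) (q1 ++ q2 ++ q3)) :
    DividedContains bs [q1, q2, q3] := by
  have hj : j < bs.length := lt_trans hjk hk
  have hi : i < bs.length := lt_trans hij hj
  refine ⟨![⟨i, hi⟩, ⟨j, hj⟩, ⟨k, hk⟩], ?_, ![c1, c2, c3], ?_, ?_, ?_⟩
  · intro a b hab
    fin_cases a <;> fin_cases b <;> simp_all [Fin.lt_def] <;> omega
  · intro m
    fin_cases m
    · have := h1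
      rw [List.getD_eq_getElem bs [] hi] at this
      simpa [List.get_eq_getElem] using this
    · have := h2
      rw [List.getD_eq_getElem bs [] hj] at this
      simpa [List.get_eq_getElem] using this
    · have := h3
      rw [List.getD_eq_getElem bs [] hk] at this
      simpa [List.get_eq_getElem] using this
  · intro m; fin_cases m <;> simp [l1, l2, l3]
  · simpa [List.ofFn_succ, List.append_assoc] using hiso

lemma dc3_elim {bs : List (List ℕ)} {q1 q2 q3 : List ℕ}
    (h : DividedContains bs [q1, q2, q3]) :
    ∃ i j k, i < j ∧ j < k ∧ k < bs.length ∧ ∃ c1 c2 c3, c1.Sublist (bs.getD i []) ∧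
      c2.Sublist (bs.getD j []) ∧ c3.Sublist (bs.getD k []) ∧
      c1.length = q1.length ∧ c2.length = q2.length ∧ c3.length = q3.length ∧
      OrderIsoList (c1 ++ c2 ++ c3) (q1 ++ q2 ++ q3) := by
  obtain ⟨g, hg, ch, hsub, hlen, hiso⟩ := h
  set i0 : Fin ([q1, q2, q3] : List (List ℕ)).length := ⟨0, by simp⟩ with hi0
  set i1 : Fin ([q1, q2, q3] : List (List ℕ)).length := ⟨1, by simp⟩ with hi1
  set i2 : Fin ([q1, q2, q3] : List (List ℕ)).length := ⟨2, by simp⟩ with hi2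
  have h01 : g i0 < g i1 := hg (by rw [hi0, hi1]; exact Fin.mk_lt_mk.mpr (by omega))
  have h12 : g i1 < g i2 := hg (by rw [hi1, hi2]; exact Fin.mk_lt_mk.mpr (by omega))
  refine ⟨(g i0).1, (g i1).1, (g i2).1, h01, h12, (g i2).2, ch i0, ch i1, ch i2, ?_, ?_, ?_,
    by simpa [hi0] using hlen i0, by simpa [hi1] using hlen i1, by simpa [hi2] using hlen i2, ?_⟩
  · have := hsub i0
    rw [List.getD_eq_getElem bs [] (g i0).2]
    simpa [List.get_eq_getElem] using this
  · have := hsub i1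
    rw [List.getD_eq_getElem bs [] (g i1).2]
    simpa [List.get_eq_getElem] using this
  · have := hsub i2
    rw [List.getD_eq_getElem bs [] (g i2).2]
    simpa [List.get_eq_getElem] using this
  · have he : (List.ofFn ch).flatten = ch i0 ++ ch i1 ++ ch i2 := by
      simp [List.ofFn_succ, hi0, hi1, hi2, List.append_assoc]
    rw [he] at hiso
    simpa [List.append_assoc] using hiso

/-- Sublist of a reversed block. -/
lemma getD_map_rev (bs : List (List ℕ)) (i : ℕ) (hi : i < bs.length) :
    (bs.map List.reverse).getD i [] = (bs.getD i []).reverse := by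
  rw [List.getD_eq_getElem _ _ (by simpa using hi), List.getD_eq_getElem _ _ hi,
    List.getElem_map]

end Aux

theorem stmt16 (p : List ℕ) (bs : List (List ℕ)) (h : IsDivision p bs) :
    Relation.ReflTransGen PQSStep (p, [], [], [], [])
        ([], [], (bs.map List.reverse).flatten, [], []) ∧
      (AvoidsPat (bs.map List.reverse).flatten [2, 3, 1] ↔
        (¬ DividedContains bs [[1, 3, 2]] ∧ ¬ DividedContains bs [[2], [1, 3]] ∧
          ¬ DividedContains bs [[3, 2], [1]] ∧ ¬ DividedContains bs [[2], [3], [1]])) := by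
  obtain ⟨hfl, hne⟩ := h
  constructor
  · have := machine_all bs [] hne
    rw [hfl] at this
    simpa using this
  constructor
  · -- avoidance implies no divided pattern
    intro hav
    refine ⟨?_, ?_, ?_, ?_⟩
    · -- [[1,3,2]]
      intro hdc
      obtain ⟨i, hi, c1, hc1, hl1, hiso⟩ := dc1_elim hdc
      obtain ⟨u, v, w, rfl, huv, -, huw, -, -, hwv⟩ := iso3_dest hiso
      have huv' : u < v := huv.mpr (by norm_num)
      have huw' : u < w := huw.mpr (by norm_num)
      have hwv' : w < v := hwv.mpr (by norm_num)
      refine hav ((contains231_iff _).mpr ⟨w, v, u, ?_, huw', hwv'⟩)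
      refine sub_flatten_one (bs.map List.reverse) i (by simpa using hi) _ ?_
      rw [getD_map_rev bs i hi, List.sublist_reverse_iff]
      simpa using hc1
    · -- [[2],[1,3]]
      intro hdc
      obtain ⟨i, j, hij, hj, c1, c2, hc1, hc2, hl1, hl2, hiso⟩ := dc2_elim hdc
      obtain ⟨a, rfl⟩ := len1 hl1
      obtain ⟨b, c, rfl⟩ := len2 hl2
      have hd := iso3_dest' (show OrderIsoList [a, b, c] [2, 1, 3] by simpa using hiso)
      have hba' : b < a := hd.2.1.mpr (by norm_num)
      have hac' : a < c := hd.2.2.1.mpr (by norm_num)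
      refine hav ((contains231_iff _).mpr ⟨a, c, b, ?_, hba', hac'⟩)
      have : ([a] ++ [c, b] : List ℕ).Sublist (bs.map List.reverse).flatten := by
        refine sub_flatten_two (bs.map List.reverse) i j hij (by simpa using hj) _ _ ?_ ?_
        · rw [getD_map_rev bs i (lt_trans hij hj), List.sublist_reverse_iff]
          simpa using hc1
        · rw [getD_map_rev bs j hj, List.sublist_reverse_iff]
          simpa using hc2
      simpa using this
    · -- [[3,2],[1]]
      intro hdc
      obtain ⟨i, j, hij, hj, c1, c2, hc1, hc2, hl1, hl2, hiso⟩ := dc2_elim hdc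
      obtain ⟨a, b, rfl⟩ := len2 hl1
      obtain ⟨c, rfl⟩ := len1 hl2
      have hd := iso3_dest' (show OrderIsoList [a, b, c] [3, 2, 1] by simpa using hiso)
      have hba' : b < a := hd.2.1.mpr (by norm_num)
      have hcb' : c < b := hd.2.2.2.2.2.mpr (by norm_num)
      refine hav ((contains231_iff _).mpr ⟨b, a, c, ?_, hcb', hba'⟩)
      have : ([b, a] ++ [c] : List ℕ).Sublist (bs.map List.reverse).flatten := by
        refine sub_flatten_two (bs.map List.reverse) i j hij (by simpa using hj) _ _ ?_ ?_
        · rw [getD_map_rev bs i (lt_trans hij hj), List.sublist_reverse_iff]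
          simpa using hc1
        · rw [getD_map_rev bs j hj, List.sublist_reverse_iff]
          simpa using hc2
      simpa using this
    · -- [[2],[3],[1]]
      intro hdc
      obtain ⟨i, j, k, hij, hjk, hk, c1, c2, c3, hc1, hc2, hc3, hl1, hl2, hl3, hiso⟩ :=
        dc3_elim hdc
      obtain ⟨a, rfl⟩ := len1 hl1
      obtain ⟨b, rfl⟩ := len1 hl2
      obtain ⟨c, rfl⟩ := len1 hl3
      have hd := iso3_dest' (show OrderIsoList [a, b, c] [2, 3, 1] by simpa using hiso)
      have hab' : a < b := hd.1.mpr (by norm_num)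
      have hca' : c < a := hd.2.2.2.1.mpr (by norm_num)
      refine hav ((contains231_iff _).mpr ⟨a, b, c, ?_, hca', hab'⟩)
      have : ([a] ++ [b] ++ [c] : List ℕ).Sublist (bs.map List.reverse).flatten := by
        refine sub_flatten_three (bs.map List.reverse) i j k hij hjk (by simpa using hk)
          _ _ _ ?_ ?_ ?_
        · rw [getD_map_rev bs i (lt_trans hij (lt_trans hjk hk)), List.sublist_reverse_iff]
          simpa using hc1
        · rw [getD_map_rev bs j (lt_trans hjk hk), List.sublist_reverse_iff]
          simpa using hc2
        · rw [getD_map_rev bs k hk, List.sublist_reverse_iff]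
          simpa using hc3
      simpa using this
  · -- no divided pattern implies avoidance
    rintro ⟨h1, h2, h3, h4⟩ hcon
    rw [contains231_iff] at hcon
    obtain ⟨x, y, z, hs, hzx, hxy⟩ := hcon
    obtain ⟨ss, hlen, hsub, hfl2⟩ := decomp _ _ hs
    have hlen' : ss.length = bs.length := by simpa using hlen
    rcases pos3 ss x y z hfl2 with ⟨i, hi, hg⟩ | ⟨i, j, hij, hj, hgi, hgj⟩ |
      ⟨i, j, hij, hj, hgi, hgj⟩ | ⟨i, j, k, hij, hjk, hk, hgi, hgj, hgk⟩
    · -- all in one block: pattern 1 3 2 in bs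
      have hi' : i < bs.length := hlen' ▸ hi
      have key : ([z, y, x] : List ℕ).Sublist (bs.getD i []) := by
        have := hsub i
        rw [hg, getD_map_rev bs i hi'] at this
        rw [List.sublist_reverse_iff] at this
        simpa using this
      exact h1 (dc1_intro hi' key (by simp)
        (iso3_of (by omega) (by omega) (by omega) (by omega) (by omega) (by omega)))
    · -- x,y in one block, z in a later one: pattern 32|1
      have hj' : j < bs.length := hlen' ▸ hj
      have hi' : i < bs.length := lt_trans hij hj'
      have key1 : ([y, x] : List ℕ).Sublist (bs.getD i []) := by
        have := hsub i
        rw [hgi, getD_map_rev bs i hi'] at this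
        rw [List.sublist_reverse_iff] at this
        simpa using this
      have key2 : ([z] : List ℕ).Sublist (bs.getD j []) := by
        have := hsub j
        rw [hgj, getD_map_rev bs j hj'] at this
        rw [List.sublist_reverse_iff] at this
        simpa using this
      refine h3 (dc2_intro hij hj' key1 key2 (by simp) (by simp) ?_)
      exact iso3_of (by omega) (by omega) (by omega) (by omega) (by omega) (by omega)
    · -- x in one block, y,z in a later one: pattern 2|13
      have hj' : j < bs.length := hlen' ▸ hj
      have hi' : i < bs.length := lt_trans hij hj'
      have key1 : ([x] : List ℕ).Sublist (bs.getD i []) := by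
        have := hsub i
        rw [hgi, getD_map_rev bs i hi'] at this
        rw [List.sublist_reverse_iff] at this
        simpa using this
      have key2 : ([z, y] : List ℕ).Sublist (bs.getD j []) := by
        have := hsub j
        rw [hgj, getD_map_rev bs j hj'] at this
        rw [List.sublist_reverse_iff] at this
        simpa using this
      refine h2 (dc2_intro hij hj' key1 key2 (by simp) (by simp) ?_)
      exact iso3_of (by omega) (by omega) (by omega) (by omega) (by omega) (by omega)
    · -- three distinct blocks: pattern 2|3|1
      have hk' : k < bs.length := hlen' ▸ hk
      have hj' : j < bs.length := lt_trans hjk hk'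
      have hi' : i < bs.length := lt_trans hij hj'
      have key1 : ([x] : List ℕ).Sublist (bs.getD i []) := by
        have := hsub i
        rw [hgi, getD_map_rev bs i hi'] at this
        rw [List.sublist_reverse_iff] at this
        simpa using this
      have key2 : ([y] : List ℕ).Sublist (bs.getD j []) := by
        have := hsub j
        rw [hgj, getD_map_rev bs j hj'] at this
        rw [List.sublist_reverse_iff] at this
        simpa using this
      have key3 : ([z] : List ℕ).Sublist (bs.getD k []) := by
        have := hsub k
        rw [hgk, getD_map_rev bs k hk'] at this
        rw [List.sublist_reverse_iff] at this
        simpa using this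
      refine h4 (dc3_intro hij hjk hk' key1 key2 key3 (by simp) (by simp) (by simp) ?_)
      exact iso3_of (by omega) (by omega) (by omega) (by omega) (by omega) (by omega)
end

section
/- The set U = {u_k : k ≥ 1}, where u_k = 2,3,5,1,7,4,9,6,11,8,...,2k+3,2k,2k+4,2k+5,2k+2 (of length 2k+5), is an infinite antichain in the permutation containment order: no u_j is contained as a pattern in u_k for j ≠ k. -/
/-- The antichain element `u_k = 2, 3, 5, 1, 7, 4, 9, 6, …, 2k+3, 2k, 2k+4, 2k+5, 2k+2`
(of length `2k + 5`, for `k ≥ 1`). -/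
def uPerm (k : ℕ) : List ℕ :=
  [2, 3, 5, 1] ++ ((List.range' 2 (k - 1)).flatMap fun i => [2 * i + 3, 2 * i]) ++
    [2 * k + 4, 2 * k + 5, 2 * k + 2]

/-- The value of `uPerm k` at (0-indexed) position `p`. -/
def uval (k p : ℕ) : ℕ :=
  if p = 0 then 2 else if p = 1 then 3 else if p = 3 then 1
  else if p = 2*k+2 then 2*k+4 else if p = 2*k+3 then 2*k+5
  else if p = 2*k+4 then 2*k+2
  else if p % 2 = 0 then p + 3 else p - 1

lemma flatLen (l : List ℕ) : (l.flatMap fun i => [2*i+3, 2*i]).length = 2 * l.length := by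
  induction l with
  | nil => simp
  | cons a t ih => simp only [List.flatMap_cons, List.length_append, List.length_cons,
      List.length_nil, ih, List.length_cons]; omega

lemma uPerm_length (k : ℕ) (hk : 1 ≤ k) : (uPerm k).length = 2*k+5 := by
  simp only [uPerm, List.length_append, flatLen, List.length_range', List.length_cons,
    List.length_nil]
  omega

lemma flatGet (l : List ℕ) : ∀ t, t < 2*l.length →
    (l.flatMap fun i => [2*i+3, 2*i]).getD t 0 =
      if t % 2 = 0 then 2*(l.getD (t/2) 0)+3 else 2*(l.getD (t/2) 0) := by
  induction l with
  | nil => intro t ht; simp at ht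
  | cons a tl ih =>
    intro t ht
    match t with
    | 0 => simp
    | 1 => simp
    | (u+2) =>
      have h2 : (u+2)/2 = u/2 + 1 := by omega
      have hm : (u+2) % 2 = u % 2 := by omega
      have hlt : u < 2 * tl.length := by
        simp only [List.length_cons] at ht; omega
      show ((2*a+3) :: (2*a) :: tl.flatMap _).getD (u+2) 0 = _
      rw [List.getD_cons_succ, List.getD_cons_succ, ih u hlt, h2, hm, List.getD_cons_succ]

set_option maxHeartbeats 2000000 in
lemma uval_getD (k : ℕ) (hk : 1 ≤ k) (p : ℕ) (hp : p < 2*k+5) :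
    (uPerm k).getD p 0 = uval k p := by
  have hB : ((List.range' 2 (k-1)).flatMap fun i => [2*i+3, 2*i]).length = 2*(k-1) := by
    rw [flatLen, List.length_range']
  rcases Nat.lt_or_ge p 4 with h4 | h4
  · interval_cases p <;> (show ((2:ℕ) :: 3 :: 5 :: 1 :: _).getD _ 0 = _) <;>
      simp only [List.getD_cons_zero, List.getD_cons_succ] <;>
      (unfold uval; split_ifs <;> first | contradiction | omega)
  · have hsplit : (uPerm k).getD p 0 =
        (((List.range' 2 (k-1)).flatMap fun i => [2*i+3, 2*i]) ++
          [2*k+4, 2*k+5, 2*k+2]).getD (p - 4) 0 := by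
      show ([2,3,5,1] ++ _).getD p 0 = _
      rw [List.getD_append_right _ _ _ _ (by simp; omega : ([2,3,5,1]:List ℕ).length ≤ p)]
      rfl
    rcases Nat.lt_or_ge p (2*k+2) with hlt | hge
    · rw [hsplit, List.getD_append _ _ _ _ (by rw [hB]; omega),
        flatGet _ (p-4) (by rw [List.length_range']; omega)]
      have hr : (List.range' 2 (k-1)).getD ((p-4)/2) 0 = 2 + (p-4)/2 := by
        rw [List.getD_eq_getElem _ _ (by rw [List.length_range']; omega),
          List.getElem_range'_1]
      rw [hr]
      unfold uval
      split_ifs <;> first | contradiction | omega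
    · rw [hsplit, List.getD_append_right _ _ _ _ (by rw [hB]; omega), hB]
      have he : p - 4 - 2*(k-1) = p - (2*k+2) := by omega
      rw [he]
      have : p = 2*k+2 ∨ p = 2*k+3 ∨ p = 2*k+4 := by omega
      rcases this with h | h | h <;> rw [h]
      · rw [show 2*k+2 - (2*k+2) = 0 by omega, List.getD_cons_zero]
        unfold uval; split_ifs <;> first | contradiction | omega
      · rw [show 2*k+3 - (2*k+2) = 1 by omega, List.getD_cons_succ, List.getD_cons_zero]
        unfold uval; split_ifs <;> first | contradiction | omega
      · rw [show 2*k+4 - (2*k+2) = 2 by omega, List.getD_cons_succ, List.getD_cons_succ,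
          List.getD_cons_zero]
        unfold uval; split_ifs <;> first | contradiction | omega

set_option maxHeartbeats 2000000 in
lemma uval_part {k q x : ℕ} (hqx : q < x) (hx : x < 2*k+5)
    (hinv : uval k x < uval k q) (h3 : x ≠ 3) (hl : x ≠ 2*k+4) :
    x = q + 1 ∨ x = q + 3 := by
  unfold uval at hinv
  split_ifs at hinv <;> first | contradiction | omega

lemma uval_L0 {k q1 q2 q3 x : ℕ} (h12 : q1 < q2) (h23 : q2 < q3) (h3x : q3 < x)
    (hx : x < 2*k+5) (i1 : uval k x < uval k q1) (i2 : uval k x < uval k q2)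
    (i3 : uval k x < uval k q3) : x = 3 ∨ x = 2*k+4 := by
  by_contra h
  push_neg at h
  rcases uval_part (by omega : q1 < x) hx i1 h.1 h.2 with a | a <;>
    rcases uval_part (by omega : q2 < x) hx i2 h.1 h.2 with b | b <;>
      rcases uval_part h3x hx i3 h.1 h.2 with c | c <;> omega

set_option maxHeartbeats 2000000 in
lemma uval_S {k i y : ℕ} (hi : 1 ≤ i) (hik : i + 1 ≤ k) (hy : y < 2*k+5)
    (h1 : 2*i < uval k y) (h2 : uval k y < 2*i+3) (h3 : 2*i+2 ≤ y) : y = 2*i+3 := by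
  unfold uval at h1 h2
  split_ifs at h1 h2 <;> first | contradiction | omega

lemma uval_odd {k p : ℕ} (h2 : p % 2 = 1) (h1 : p ≠ 1) (h3 : p ≠ 3) (hc : p ≠ 2*k+3) :
    uval k p = p - 1 := by
  unfold uval; split_ifs <;> first | contradiction | omega

lemma uval_even {k p : ℕ} (h2 : p % 2 = 0) (h0 : p ≠ 0) (ha : p ≠ 2*k+2) (hb : p ≠ 2*k+4) :
    uval k p = p + 3 := by
  unfold uval; split_ifs <;> first | contradiction | omega

lemma uval_zero (k : ℕ) : uval k 0 = 2 := by unfold uval; split_ifs <;> first | contradiction | omega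
lemma uval_one (k : ℕ) : uval k 1 = 3 := by unfold uval; split_ifs <;> first | contradiction | omega
lemma uval_three (k : ℕ) : uval k 3 = 1 := by unfold uval; split_ifs <;> first | contradiction | omega
lemma uval_two {k : ℕ} (hk : 1 ≤ k) : uval k 2 = 5 := by unfold uval; split_ifs <;> first | contradiction | omega
lemma uval_last (k : ℕ) : uval k (2*k+4) = 2*k+2 := by unfold uval; split_ifs <;> first | contradiction | omega

lemma smono_add {g : ℕ → ℕ} (h : StrictMono g) (a d : ℕ) : g a + d ≤ g (a + d) := by
  induction d with
  | zero => simp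
  | succ d ih =>
    have := h (show a + d < a + (d+1) by omega)
    omega

theorem stmt17 :
    Set.Infinite {p : List ℕ | ∃ k, 1 ≤ k ∧ p = uPerm k} ∧
      ∀ j k, 1 ≤ j → 1 ≤ k → j ≠ k → ¬ ContainsPat (uPerm k) (uPerm j) := by
  constructor
  · apply Set.infinite_of_injective_forall_mem (f := fun t : ℕ => uPerm (t+1))
    · intro a b hab
      have := congrArg List.length hab
      rw [uPerm_length (a+1) (by omega), uPerm_length (b+1) (by omega)] at this
      omega
    · intro a
      exact ⟨a+1, by omega, rfl⟩
  · intro j k hj hk hne hcon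
    obtain ⟨s, hsub, hslen, hcomp⟩ := hcon
    have hlk : (uPerm k).length = 2*k+5 := uPerm_length k hk
    have hlj : (uPerm j).length = 2*j+5 := uPerm_length j hj
    have hsl : s.length = 2*j+5 := by rw [hslen, hlj]
    have hle : s.length ≤ (uPerm k).length := hsub.length_le
    have hjk : j < k := by
      rcases lt_or_ge j k with h | h
      · exact h
      · omega
    obtain ⟨f, hf⟩ := List.sublist_iff_exists_orderEmbedding_getElem?_eq.mp hsub
    have hmono : StrictMono (fun a => (f a : ℕ)) := fun a b hab => f.strictMono hab
    -- basic facts about the embedding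
    have hkey : ∀ a, a < 2*j+5 → (f a : ℕ) < 2*k+5 ∧
        (uPerm k).getD (f a) 0 = s.getD a 0 := by
      intro a ha
      have h1 := hf a
      rw [List.getElem?_eq_getElem (by omega : a < s.length)] at h1
      have h2 : (f a : ℕ) < (uPerm k).length := by
        by_contra hcc
        rw [List.getElem?_eq_none (by omega)] at h1
        exact Option.some_ne_none _ h1
      rw [List.getElem?_eq_getElem h2] at h1
      refine ⟨by omega, ?_⟩
      rw [List.getD_eq_getElem _ _ h2, List.getD_eq_getElem _ _ (by omega : a < s.length)]
      exact (Option.some_injective _ h1).symm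
    have hflt : ∀ a, a < 2*j+5 → (f a : ℕ) < 2*k+5 := fun a ha => (hkey a ha).1
    -- comparison transfer in terms of uval
    have hcmp : ∀ a b, a < 2*j+5 → b < 2*j+5 →
        (uval k (f a) < uval k (f b) ↔ uval j a < uval j b) := by
      intro a b ha hb
      rw [← uval_getD k hk _ (hflt a ha), ← uval_getD k hk _ (hflt b hb),
        (hkey a ha).2, (hkey b hb).2,
        ← uval_getD j hj a (by omega), ← uval_getD j hj b (by omega)]
      exact hcomp a b (by omega) (by omega)
    -- Step 0 : f is the identity on 0,1,2,3
    have hid : f 0 = 0 ∧ f 1 = 1 ∧ f 2 = 2 ∧ f 3 = 3 := by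
      have m01 : (f 0 : ℕ) < f 1 := hmono (by omega)
      have m12 : (f 1 : ℕ) < f 2 := hmono (by omega)
      have m23 : (f 2 : ℕ) < f 3 := hmono (by omega)
      have i0 : uval k (f 3) < uval k (f 0) := by
        rw [hcmp 3 0 (by omega) (by omega), uval_three, uval_zero]; omega
      have i1 : uval k (f 3) < uval k (f 1) := by
        rw [hcmp 3 1 (by omega) (by omega), uval_three, uval_one]; omega
      have i2 : uval k (f 3) < uval k (f 2) := by
        rw [hcmp 3 2 (by omega) (by omega), uval_three, uval_two hj]; omega
      have hL := uval_L0 m01 m12 m23 (hflt 3 (by omega)) i0 i1 i2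
      have hbound : (f 3 : ℕ) + (2*j+1) ≤ f (3 + (2*j+1)) := smono_add hmono 3 (2*j+1)
      have hend : (f (2*j+4) : ℕ) < 2*k+5 := hflt (2*j+4) (by omega)
      have h3 : (f 3 : ℕ) = 3 := by
        have : (3 : ℕ) + (2*j+1) = 2*j+4 := by omega
        rw [this] at hbound
        omega
      refine ⟨by omega, by omega, by omega, h3⟩
    obtain ⟨hf0, hf1, hf2, hf3⟩ := hid
    -- the inductive forcing along the body
    have key : ∀ i, 1 ≤ i → i ≤ j → (f (2*i) : ℕ) = 2*i ∧ (f (2*i+1) : ℕ) = 2*i+1 := by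
      intro i hi
      induction i, hi using Nat.le_induction with
      | base => intro _; exact ⟨by simpa using hf2, by simpa using hf3⟩
      | succ i hi ih =>
        intro hij
        obtain ⟨he, ho⟩ := ih (by omega)
        -- the next pattern entry at position 2i+3 has value 2i+2
        have hpv : uval j (2*i+3) = 2*i+2 := by
          rw [uval_odd (by omega) (by omega) (by omega) (by omega : 2*i+3 ≠ 2*j+3)]
          omega
        have hylt : (f (2*i+3) : ℕ) < 2*k+5 := hflt _ (by omega)
        have hlow : 2*i < uval k (f (2*i+3)) := by
          rcases Nat.eq_or_lt_of_le hi with h1 | h2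
          · -- i = 1 : compare with position 1 (value 3)
            have := (hcmp 1 (2*i+3) (by omega) (by omega)).mpr
              (by rw [uval_one, hpv]; omega)
            rw [hf1, uval_one] at this
            omega
          · -- i ≥ 2 : compare with position 2i+1 (value 2i)
            have hv : uval j (2*i+1) = 2*i := by
              rw [uval_odd (by omega) (by omega) (by omega) (by omega : 2*i+1 ≠ 2*j+3)]
              omega
            have := (hcmp (2*i+1) (2*i+3) (by omega) (by omega)).mpr
              (by rw [hv, hpv]; omega)
            rw [ho] at this
            rw [uval_odd (by omega) (by omega) (by omega : (2*i+1 : ℕ) ≠ 3)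
              (by omega : 2*i+1 ≠ 2*k+3)] at this
            omega
        have hhigh : uval k (f (2*i+3)) < 2*i+3 := by
          rcases Nat.eq_or_lt_of_le hi with h1 | h2
          · -- i = 1 : compare with position 2 (value 5)
            have := (hcmp (2*i+3) 2 (by omega) (by omega)).mpr
              (by rw [uval_two hj, hpv]; omega)
            rw [hf2, uval_two hk] at this
            omega
          · -- i ≥ 2 : compare with position 2i (value 2i+3)
            have hv : uval j (2*i) = 2*i+3 := by
              rw [uval_even (by omega) (by omega) (by omega : 2*i ≠ 2*j+2)
                (by omega : 2*i ≠ 2*j+4)]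
            have := (hcmp (2*i+3) (2*i) (by omega) (by omega)).mpr
              (by rw [hv, hpv]; omega)
            rw [he] at this
            rw [uval_even (by omega) (by omega) (by omega : 2*i ≠ 2*k+2)
              (by omega : 2*i ≠ 2*k+4)] at this
            omega
        have hpos : 2*i+2 ≤ (f (2*i+3) : ℕ) := by
          have s1 : (f (2*i+1) : ℕ) < f (2*i+2) := hmono (by omega)
          have s2 : (f (2*i+2) : ℕ) < f (2*i+3) := hmono (by omega)
          omega
        have hy : (f (2*i+3) : ℕ) = 2*i+3 :=
          uval_S (by omega) (by omega) hylt hlow hhigh hpos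
        have hmid : (f (2*i+2) : ℕ) = 2*i+2 := by
          have s1 : (f (2*i+1) : ℕ) < f (2*i+2) := hmono (by omega)
          have s2 : (f (2*i+2) : ℕ) < f (2*i+3) := hmono (by omega)
          omega
        exact ⟨by rw [show 2*(i+1) = 2*i+2 by omega]; exact hmid,
          by rw [show 2*(i+1)+1 = 2*i+3 by omega]; exact hy⟩
    obtain ⟨hej, hoj⟩ := key j (by omega) (le_refl j)
    -- final contradiction with the last pattern entry (position 2j+4, value 2j+2)
    have hpv : uval j (2*j+4) = 2*j+2 := uval_last j
    have hylt : (f (2*j+4) : ℕ) < 2*k+5 := hflt _ (by omega)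
    have hlow : 2*j < uval k (f (2*j+4)) := by
      rcases Nat.eq_or_lt_of_le hj with h1 | h2
      · have := (hcmp 1 (2*j+4) (by omega) (by omega)).mpr
          (by rw [uval_one, hpv]; omega)
        rw [hf1, uval_one] at this
        omega
      · have hv : uval j (2*j+1) = 2*j := by
          rw [uval_odd (by omega) (by omega) (by omega) (by omega : 2*j+1 ≠ 2*j+3)]
          omega
        have := (hcmp (2*j+1) (2*j+4) (by omega) (by omega)).mpr
          (by rw [hv, hpv]; omega)
        rw [hoj] at this
        rw [uval_odd (by omega) (by omega) (by omega : (2*j+1 : ℕ) ≠ 3)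
          (by omega : 2*j+1 ≠ 2*k+3)] at this
        omega
    have hhigh : uval k (f (2*j+4)) < 2*j+3 := by
      rcases Nat.eq_or_lt_of_le hj with h1 | h2
      · have := (hcmp (2*j+4) 2 (by omega) (by omega)).mpr
          (by rw [uval_two hj, hpv]; omega)
        rw [hf2, uval_two hk] at this
        omega
      · have hv : uval j (2*j) = 2*j+3 := by
          rw [uval_even (by omega) (by omega) (by omega : 2*j ≠ 2*j+2)
            (by omega : 2*j ≠ 2*j+4)]
        have := (hcmp (2*j+4) (2*j) (by omega) (by omega)).mpr
          (by rw [hv, hpv]; omega)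
        rw [hej] at this
        rw [uval_even (by omega) (by omega) (by omega : 2*j ≠ 2*k+2)
          (by omega : 2*j ≠ 2*k+4)] at this
        omega
    have hpos : 2*j+4 ≤ (f (2*j+4) : ℕ) := by
      have s1 : (f (2*j+1) : ℕ) < f (2*j+2) := hmono (by omega)
      have s2 : (f (2*j+2) : ℕ) < f (2*j+3) := hmono (by omega)
      have s3 : (f (2*j+3) : ℕ) < f (2*j+4) := hmono (by omega)
      omega
    have := uval_S (le_refl 1 |>.trans hj) (by omega) hylt hlow hhigh (by omega)
    omega
end
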